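/- Let $d : \mathbb{N} \times \mathbb{N} \to \mathbb{R}$. Then $d$ satisfies the recurrence $d_{l,m} + d_{l+1,m+2} + d_{l+2,m+1} = d_{l+2,m+2} + d_{l,m+1} + d_{l+1,m}$ for all $l, m \geq 0$ if and only if there exists a function $k : \mathbb{Z} \to \mathbb{R}$ such that $d_{l+1,m+1} - d_{l,m+1} - d_{l+1,m} + d_{l,m} = k(l - m)$ for all $l, m \geq 0$. -/

import Mathlib

/-- Proposition 1(i): the universal degree recurrence is equivalent to the mixed
second difference depending only on `l - m`. -/
theorem stmt_0 (d : ℕ × ℕ → ℝ) :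
    (∀ l m : ℕ, d (l, m) + d (l + 1, m + 2) + d (l + 2, m + 1) =
        d (l + 2, m + 2) + d (l, m + 1) + d (l + 1, m)) ↔
    (∃ k : ℤ → ℝ, ∀ l m : ℕ,
        d (l + 1, m + 1) - d (l, m + 1) - d (l + 1, m) + d (l, m) = k ((l : ℤ) - (m : ℤ))) := by
  set D : ℕ → ℕ → ℝ := fun l m => d (l + 1, m + 1) - d (l, m + 1) - d (l + 1, m) + d (l, m)
    with hD
  constructor
  · intro h
    have step : ∀ l m : ℕ, D (l + 1) (m + 1) = D l m := by
      intro l m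
      have := h l m
      simp only [hD]
      linarith
    have shift : ∀ j l m : ℕ, D (l + j) (m + j) = D l m := by
      intro j
      induction j with
      | zero => intro l m; rfl
      | succ n ih =>
        intro l m
        have : l + (n + 1) = (l + n) + 1 := by ring
        rw [this, show m + (n + 1) = (m + n) + 1 by ring, step, ih]
    refine ⟨fun n => D n.toNat (-n).toNat, fun l m => ?_⟩
    rcases le_or_gt m l with hle | hlt
    · have hn : ((l : ℤ) - m).toNat = l - m := by omega
      have hn' : (-((l : ℤ) - m)).toNat = 0 := by omega
      simp only [hn, hn']
      have := shift m (l - m) 0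
      rw [Nat.sub_add_cancel hle, Nat.zero_add] at this
      simp only [hD] at this ⊢
      linarith
    · have hn : ((l : ℤ) - m).toNat = 0 := by omega
      have hn' : (-((l : ℤ) - m)).toNat = m - l := by omega
      simp only [hn, hn']
      have := shift l 0 (m - l)
      rw [Nat.zero_add, Nat.sub_add_cancel hlt.le] at this
      simp only [hD] at this ⊢
      linarith
  · rintro ⟨k, hk⟩ l m
    have h1 := hk l m
    have h2 := hk (l + 1) (m + 1)
    have : ((l : ℤ) + 1) - ((m : ℤ) + 1) = (l : ℤ) - m := by ring
    simp only [Nat.cast_add, Nat.cast_one, this] at h2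
    linarith
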